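/- With the half-size splitting setup below, for every i with 1 ≤ i ≤ m and 2i ≤ n, the even-numbered components of the Hankel product satisfy y_{2i} = p_i + r_i. -/

import Mathlib

private lemma int_sum_top {R : Type*} [AddCommMonoid R] (f : ℤ → R) (a b : ℤ) (h : a ≤ b + 1) :
    ∑ k ∈ Finset.Icc a (b + 1), f k = (∑ k ∈ Finset.Icc a b, f k) + f (b + 1) := by
  rw [show Finset.Icc a (b+1) = insert (b+1) (Finset.Icc a b) by ext; simp; omega,
    Finset.sum_insert (by simp), add_comm]

private lemma psplit {R : Type*} [AddCommMonoid R] (F : ℤ → R) (n : ℕ) :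
    ∑ k ∈ Finset.Icc (1:ℤ) (n:ℤ), F k
      = (∑ j ∈ Finset.Icc (1:ℤ) (((n+1)/2 : ℕ):ℤ), F (2*j-1))
      + ∑ j ∈ Finset.Icc (1:ℤ) ((n/2 : ℕ):ℤ), F (2*j) := by
  induction n with
  | zero => simp
  | succ n ih =>
    rw [show ((n+1 : ℕ):ℤ) = (n:ℤ) + 1 by push_cast; ring,
      int_sum_top F 1 (n:ℤ) (by omega), ih]
    rcases Nat.even_or_odd n with ⟨t, ht⟩ | ⟨t, ht⟩
    · rw [show ((n+1+1)/2 : ℕ) = t + 1 by omega, show ((n+1)/2 : ℕ) = t by omega,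
        show (n/2 : ℕ) = t by omega,
        show ((t+1 : ℕ):ℤ) = (t:ℤ) + 1 by push_cast; ring,
        int_sum_top (fun j => F (2*j-1)) 1 (t:ℤ) (by omega)]
      rw [show (2 * ((t:ℤ)+1) - 1) = (n:ℤ) + 1 by omega]
      abel
    · rw [show ((n+1+1)/2 : ℕ) = t + 1 by omega, show ((n+1)/2 : ℕ) = t + 1 by omega,
        show (n/2 : ℕ) = t by omega,
        show ((t+1 : ℕ):ℤ) = (t:ℤ) + 1 by push_cast; ring,
        int_sum_top (fun j => F (2*j)) 1 (t:ℤ) (by omega)]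
      rw [show (2 * ((t:ℤ)+1)) = (n:ℤ) + 1 by omega]
      abel

private lemma int_shift {R : Type*} [AddCommMonoid R] (G : ℤ → R) (hG : G 1 = 0) (M : ℕ) :
    ∑ j ∈ Finset.Icc (1:ℤ) ((M:ℤ)+1), G j = ∑ j ∈ Finset.Icc (1:ℤ) (M:ℤ), G (j+1) := by
  induction M with
  | zero => simp [hG]
  | succ M ih =>
    push_cast
    rw [int_sum_top G 1 ((M:ℤ)+1) (by omega), int_sum_top (fun j => G (j+1)) 1 (M:ℤ) (by omega)]
    push_cast at ih
    rw [ih]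


/-- Half-size splitting of the Hankel product: with c_i = a_{2i−1}+a_{2i},
d_i = a_{2i}, h_j = x_{2j−1}, f_j = x_{2j−1}−x_{2j}, and the half-size Hankel
products p (size m = ⌊(n+1)/2⌋) and r (size m₁ = ⌈(n+1)/2⌉, with e_i = a_{2i−1}, g_j = x_{2j−2}−x_{2j−1}), the even-numbered components satisfy
y_{2i} = p_i + r_i for i with 1 ≤ i ≤ m and 2i ≤ n. -/
theorem half_size_split_even
    (R : Type*) [CommRing R] (n : ℕ) (hn : 2 ≤ n)
    (a x : ℤ → R)
    (ha0 : ∀ j : ℤ, j < 1 ∨ (2 * (n : ℤ) - 1) < j → a j = 0)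
    (hx0 : ∀ j : ℤ, j < 1 ∨ (n : ℤ) < j → x j = 0)
    (y : ℤ → R)
    (hy : ∀ i : ℤ, 1 ≤ i → i ≤ (n : ℤ) →
      y i = ∑ j ∈ Finset.Icc (1 : ℤ) (n : ℤ), a (i + j - 1) * x j)
    (m m₁ : ℕ) (hm : m = (n + 1) / 2) (hm₁ : m₁ = (n + 2) / 2)
    (c d e h f g : ℤ → R)
    (hc : ∀ i : ℤ, c i = a (2 * i - 1) + a (2 * i))
    (hd : ∀ i : ℤ, d i = a (2 * i))
    (he : ∀ i : ℤ, e i = a (2 * i - 1))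
    (hh : ∀ j : ℤ, h j = x (2 * j - 1))
    (hf : ∀ j : ℤ, f j = x (2 * j - 1) - x (2 * j))
    (hg : ∀ j : ℤ, g j = x (2 * j - 2) - x (2 * j - 1))
    (p q r : ℤ → R)
    (hp : ∀ i : ℤ, p i = ∑ j ∈ Finset.Icc (1 : ℤ) (m : ℤ), c (i + j - 1) * h j)
    (hq : ∀ i : ℤ, q i = ∑ j ∈ Finset.Icc (1 : ℤ) (m : ℤ), d (i + j - 1) * f j)
    (hr : ∀ i : ℤ, r i = ∑ j ∈ Finset.Icc (1 : ℤ) (m₁ : ℤ), e (i + j - 1) * g j) :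
    ∀ i : ℤ, 1 ≤ i → i ≤ (m : ℤ) → 2 * i ≤ (n : ℤ) → y (2 * i) = p i + r i := by
  intro i hi1 him h2i
  obtain ⟨M, hM⟩ : ∃ M : ℕ, m₁ = M + 1 := ⟨m₁ - 1, by omega⟩
  -- LHS
  rw [hy (2*i) (by omega) h2i,
    psplit (fun k => a (2*i + k - 1) * x k) n,
    show ((n+1)/2 : ℕ) = m from hm.symm, show (n/2 : ℕ) = M by omega]
  -- RHS
  rw [hp, hr]
  simp only [hc, he, hh, hg]
  -- split r's sum
  have hrsplit : ∑ j ∈ Finset.Icc (1:ℤ) (m₁:ℤ),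
      a (2*(i+j-1)-1) * (x (2*j-2) - x (2*j-1))
      = (∑ j ∈ Finset.Icc (1:ℤ) (m₁:ℤ), a (2*i+2*j-3) * x (2*j-2))
        - ∑ j ∈ Finset.Icc (1:ℤ) (m₁:ℤ), a (2*i+2*j-3) * x (2*j-1) := by
    rw [← Finset.sum_sub_distrib]
    refine Finset.sum_congr rfl fun j _ => ?_
    rw [show 2*(i+j-1)-1 = 2*i+2*j-3 by ring]
    ring
  rw [hrsplit]
  -- shift the x(2j-2) sum
  have hcast : (m₁ : ℤ) = (M:ℤ) + 1 := by rw [hM]; push_cast; ring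
  have hshift : (∑ j ∈ Finset.Icc (1:ℤ) (m₁:ℤ), a (2*i+2*j-3) * x (2*j-2))
      = ∑ j ∈ Finset.Icc (1:ℤ) (M:ℤ), a (2*i+2*j-1) * x (2*j) := by
    rw [hcast, int_shift (fun j => a (2*i+2*j-3) * x (2*j-2))
      (by show a (2*i+2*1-3) * x (2*1-2) = 0; rw [show 2*(1:ℤ)-2 = 0 by ring, hx0 0 (Or.inl (by omega))]; ring) M]
    refine Finset.sum_congr rfl fun j _ => ?_
    rw [show 2*i+2*(j+1)-3 = 2*i+2*j-1 by ring, show 2*(j+1)-2 = 2*j by ring]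
  rw [hshift]
  -- truncate the x(2j-1) sum from m₁ to m
  have htrunc : (∑ j ∈ Finset.Icc (1:ℤ) (m₁:ℤ), a (2*i+2*j-3) * x (2*j-1))
      = ∑ j ∈ Finset.Icc (1:ℤ) (m:ℤ), a (2*i+2*j-3) * x (2*j-1) := by
    rcases (by omega : m₁ = m ∨ (m₁ = m + 1 ∧ n = 2 * m)) with h' | ⟨h', hn'⟩
    · rw [h']
    · rw [show (m₁:ℤ) = (m:ℤ)+1 by rw [h']; push_cast; ring,
        int_sum_top (fun j => a (2*i+2*j-3) * x (2*j-1)) 1 (m:ℤ) (by omega)]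
      rw [hx0 (2*((m:ℤ)+1)-1) (Or.inr (by omega)), mul_zero, add_zero]
  rw [htrunc]
  -- distribute and finish
  have hdist : ∑ j ∈ Finset.Icc (1:ℤ) (m:ℤ), (a (2*(i+j-1)-1) + a (2*(i+j-1))) * x (2*j-1)
      = (∑ j ∈ Finset.Icc (1:ℤ) (m:ℤ), a (2*i+2*j-3) * x (2*j-1))
        + ∑ j ∈ Finset.Icc (1:ℤ) (m:ℤ), a (2*i+2*j-2) * x (2*j-1) := by
    rw [← Finset.sum_add_distrib]
    refine Finset.sum_congr rfl fun j _ => ?_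
    rw [show 2*(i+j-1)-1 = 2*i+2*j-3 by ring, show 2*(i+j-1) = 2*i+2*j-2 by ring]
    ring
  rw [hdist]
  have hodd : ∑ j ∈ Finset.Icc (1:ℤ) (m:ℤ), a (2*i + (2*j-1) - 1) * x (2*j-1)
      = ∑ j ∈ Finset.Icc (1:ℤ) (m:ℤ), a (2*i+2*j-2) * x (2*j-1) :=
    Finset.sum_congr rfl fun j _ => by rw [show 2*i+(2*j-1)-1 = 2*i+2*j-2 by ring]
  have heven : ∑ j ∈ Finset.Icc (1:ℤ) (M:ℤ), a (2*i + 2*j - 1) * x (2*j)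
      = ∑ j ∈ Finset.Icc (1:ℤ) (M:ℤ), a (2*i+2*j-1) * x (2*j) := rfl
  rw [hodd]
  abel
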